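/- The first column of the Catalan triangle satisfies the Catalan recurrence: C(n+1,1) = Σ_{k=1}^{n} C(k,1)·C(n+1-k,1) for all n ≥ 1, where C(i,j) are defined by the Catalan triangle recursion. -/

import Mathlib

open Finset

/-- Triangular double-sum reindexing used for the Catalan convolution. -/
theorem catalan_triangle_segner_triSwap (N : ℕ) (f H : ℕ → ℝ) :
    ∑ m ∈ range (N+1), f m * ∑ a ∈ range (N - m), f a * H (m+a)
      = ∑ s ∈ range N, (∑ m ∈ range (s+1), f m * f (s-m)) * H s := by
  simp_rw [mul_sum, sum_mul]
  rw [Finset.sum_sigma', Finset.sum_sigma']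
  refine Finset.sum_nbij' (fun p : Σ _ : ℕ, ℕ => (⟨p.1 + p.2, p.1⟩ : Σ _ : ℕ, ℕ))
    (fun p : Σ _ : ℕ, ℕ => (⟨p.2, p.1 - p.2⟩ : Σ _ : ℕ, ℕ)) ?_ ?_ ?_ ?_ ?_
  all_goals simp only [Finset.mem_sigma, Finset.mem_range, Sigma.forall]
  · intro a b h; omega
  · intro a b h; omega
  · intro a b h
    refine Sigma.ext rfl (by simp)
  · intro a b h
    refine Sigma.ext (by simp; omega) (by simp)
  · intro a b h
    have hb : a + b - a = b := by omega
    rw [hb]; ring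

/-- The first column of the Catalan triangle satisfies Segner's recurrence:
C(n+1,1) = Σ_{k=1}^n C(k,1)·C(n+1-k,1) for n ≥ 1. -/
theorem catalan_triangle_segner (C : ℕ → ℕ → ℝ)
    (h11 : C 1 1 = 1)
    (h0 : ∀ i, C i 0 = 0)
    (hgt : ∀ i j, i < j → C i j = 0)
    (hrec : ∀ i j, 1 ≤ j → j ≤ i → (i, j) ≠ (1, 1) →
      C i j = C (i - 1) (j - 1) + C i (j + 1)) :
    ∀ n, 1 ≤ n → C (n + 1) 1 = ∑ k ∈ Finset.Icc 1 n, C k 1 * C (n + 1 - k) 1 := by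
  -- cast of catalan succ recurrence
  have hcats : ∀ s : ℕ, (catalan (s+1) : ℝ) = ∑ m ∈ range (s+1), (catalan m : ℝ) * (catalan (s-m) : ℝ) := by
    intro s
    rw [catalan_succ]
    push_cast
    exact Fin.sum_univ_eq_sum_range (fun m => (catalan m : ℝ) * (catalan (s-m) : ℝ)) (s+1)
  -- Lemma B: column convolution
  have lemB : ∀ i j, 1 ≤ j → C i (j+1) = ∑ m ∈ range i, (catalan m : ℝ) * C (i-1-m) j := by
    intro i
    induction i using Nat.strong_induction_on with
    | _ i IH =>
    suffices hd : ∀ d j, 1 ≤ j → i ≤ j + d →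
        C i (j+1) = ∑ m ∈ range i, (catalan m : ℝ) * C (i-1-m) j by
      intro j hj; exact hd i j hj (Nat.le_add_left _ _)
    have base : ∀ j, 1 ≤ j → i ≤ j →
        C i (j+1) = ∑ m ∈ range i, (catalan m : ℝ) * C (i-1-m) j := by
      intro j hj hij
      rw [hgt i (j+1) (by omega)]
      symm
      apply Finset.sum_eq_zero
      intro m hm
      rw [mem_range] at hm
      rw [hgt (i-1-m) j (by omega), mul_zero]
    intro d
    induction d with
    | zero => intro j hj hij; exact base j hj (by omega)
    | succ d IHd =>
      intro j hj hij
      by_cases hc : i ≤ j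
      · exact base j hj hc
      · push_neg at hc
        have h2 : 2 ≤ i := by omega
        rw [hrec i (j+1) (by omega) (by omega) (by simp; omega)]
        have e1 : (j+1) - 1 = j := by omega
        have e2 : (j+1) + 1 = (j+1) + 1 := rfl
        rw [e1]
        rw [IHd (j+1) (by omega) (by omega)]
        have hin : ∀ m ∈ range i, (catalan m : ℝ) * C (i-1-m) (j+1)
            = (catalan m : ℝ) * ∑ a ∈ range (i-1-m), (catalan a : ℝ) * C (i-1-m-1-a) j := by
          intro m hm
          rw [mem_range] at hm
          rw [IH (i-1-m) (by omega) j hj]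
        rw [Finset.sum_congr rfl hin]
        obtain ⟨N, rfl⟩ : ∃ N, i = N + 1 := ⟨i-1, by omega⟩
        -- normalize indices
        have hidx : ∀ m a : ℕ, (N+1-1-m-1-a) = N-1-(m+a) := by intro m a; omega
        have hidx2 : ∀ m : ℕ, (N+1-1-m) = N - m := by intro m; omega
        simp_rw [hidx, hidx2]
        rw [catalan_triangle_segner_triSwap N (fun m => (catalan m : ℝ)) (fun t => C (N-1-t) j)]
        rw [Finset.sum_range_succ' (fun m => (catalan m : ℝ) * C (N-m) j) N]
        simp only [catalan_zero, Nat.cast_one, one_mul, Nat.sub_zero]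
        rw [add_comm]
        congr 1
        apply Finset.sum_congr rfl
        intro s hs
        rw [mem_range] at hs
        rw [← hcats s]
        have : N - (s+1) = N - 1 - s := by omega
        rw [this]
    -- end lemB
  have hcol : ∀ n, 1 ≤ n → C (n+1) 1 = ∑ m ∈ range (n+1), (catalan m : ℝ) * C (n-m) 1 := by
    intro n hn
    rw [hrec (n+1) 1 le_rfl (by omega) (by simp; omega)]
    simp only [Nat.add_sub_cancel, Nat.sub_self]
    rw [h0, zero_add, lemB (n+1) 1 le_rfl]
    apply Finset.sum_congr rfl
    intro m hm
    have : n + 1 - 1 - m = n - m := by omega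
    rw [this]
  have hcat : ∀ k, 1 ≤ k → C k 1 = (catalan (k-1) : ℝ) := by
    intro k
    induction k using Nat.strong_induction_on with
    | _ k IH =>
    intro hk
    match k, hk with
    | 1, _ => simpa using h11
    | (n+2), _ =>
      rw [show n+2 = (n+1)+1 from rfl, hcol (n+1) (by omega)]
      rw [Finset.sum_range_succ]
      rw [show n+1-(n+1) = 0 from by omega, hgt 0 1 one_pos, mul_zero, add_zero]
      have hterm : ∀ m ∈ range (n+1), (catalan m : ℝ) * C (n+1-m) 1
          = (catalan m : ℝ) * (catalan (n-m) : ℝ) := by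
        intro m hm
        rw [mem_range] at hm
        rw [IH (n+1-m) (by omega) (by omega)]
        have : n+1-m-1 = n-m := by omega
        rw [this]
      rw [Finset.sum_congr rfl hterm, ← hcats n]
      norm_num
  -- main statement
  intro n hn
  rw [hcat (n+1) (by omega)]
  have hterm : ∀ k ∈ Finset.Icc 1 n, C k 1 * C (n+1-k) 1
      = (catalan (k-1) : ℝ) * (catalan (n-k) : ℝ) := by
    intro k hk
    rw [Finset.mem_Icc] at hk
    rw [hcat k hk.1, hcat (n+1-k) (by omega)]
    have : n+1-k-1 = n-k := by omega
    rw [this]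
  rw [Finset.sum_congr rfl hterm]
  obtain ⟨N, rfl⟩ : ∃ N, n = N + 1 := ⟨n-1, by omega⟩
  rw [show (N+1+1)-1 = N+1 from rfl, hcats N]
  rw [show Finset.Icc 1 (N+1) = Finset.Ico 1 (N+2) from by rw [← Finset.Ico_add_one_right_eq_Icc]; rfl]
  rw [Finset.sum_Ico_eq_sum_range]
  apply Finset.sum_congr (by congr 1)
  intro m hm
  rw [mem_range] at hm
  have e1 : 1 + m - 1 = m := by omega
  have e2 : N + 1 - (1 + m) = N - m := by omega
  rw [e1, e2]
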